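/- Let τ > 0 and let (μ_i)_{i≥1} be a non-increasing sequence of nonnegative reals with μ_i ≤ C₁ i^{−s} for some C₁ > 0 and s > 0. Define h_i = μ_i/(τ + μ_i). Then Σ_{i=1}^∞ (h_i / i) ≤ c_s · log(e + C₁/τ) for a constant c_s depending only on s. -/

import Mathlib

lemma rpow_tele (s : ℝ) (hs : 0 < s) (a : ℝ) (ha : 1 ≤ a) :
    s * (a + 1) ^ (-(s + 1)) ≤ a ^ (-s) - (a + 1) ^ (-s) := by
  have ha0 : (0:ℝ) < a := by linarith
  have hb0 : (0:ℝ) < a + 1 := by linarith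
  have hlog : 1 / (a + 1) ≤ Real.log (a + 1) - Real.log a := by
    have h := Real.log_le_sub_one_of_pos (div_pos ha0 hb0)
    rw [Real.log_div ha0.ne' hb0.ne'] at h
    have h2 : a / (a + 1) - 1 = -(1 / (a + 1)) := by field_simp; ring
    linarith [h2 ▸ h]
  have hexp : 1 + s / (a + 1) ≤ ((a + 1) / a) ^ s := by
    rw [Real.rpow_def_of_pos (div_pos hb0 ha0), mul_comm]
    have hl : Real.log ((a + 1) / a) = Real.log (a + 1) - Real.log a :=
      Real.log_div hb0.ne' ha0.ne'
    have h3 : s * (1 / (a + 1)) ≤ s * Real.log ((a + 1) / a) := by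
      rw [hl]; exact mul_le_mul_of_nonneg_left hlog hs.le
    have h4 := Real.add_one_le_exp (s * Real.log ((a + 1) / a))
    have : s / (a + 1) = s * (1 / (a + 1)) := by ring
    linarith
  have key : a ^ (-s) = (a + 1) ^ (-s) * ((a + 1) / a) ^ s := by
    rw [Real.div_rpow hb0.le ha0.le, Real.rpow_neg hb0.le, Real.rpow_neg ha0.le]
    have h5 : (0:ℝ) < a ^ s := Real.rpow_pos_of_pos ha0 s
    have h6 : (0:ℝ) < (a + 1) ^ s := Real.rpow_pos_of_pos hb0 s
    field_simp
  have h1 : (a + 1) ^ (-(s + 1)) = (a + 1) ^ (-s) * (a + 1)⁻¹ := by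
    rw [← Real.rpow_neg_one (a + 1), ← Real.rpow_add hb0]; ring_nf
  rw [key, h1]
  have hp : (0:ℝ) < (a + 1) ^ (-s) := Real.rpow_pos_of_pos hb0 (-s)
  have h7 : s / (a + 1) ≤ ((a + 1) / a) ^ s - 1 := by linarith
  have h8 : (a + 1) ^ (-s) * (s / (a + 1)) ≤ (a + 1) ^ (-s) * (((a + 1) / a) ^ s - 1) :=
    mul_le_mul_of_nonneg_left h7 hp.le
  have h9 : (a + 1) ^ (-s) * (s / (a + 1)) = s * ((a + 1) ^ (-s) * (a + 1)⁻¹) := by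
    field_simp
  linarith [h8, h9 ▸ h8]

lemma tail_rpow_sum (s : ℝ) (hs : 0 < s) (N : ℕ) (hN : 1 ≤ N) :
    ∑' i : ℕ, ((i : ℝ) + N + 1) ^ (-(s + 1)) ≤ (1 / s) * (N : ℝ) ^ (-s) := by
  have hN1 : (1:ℝ) ≤ (N:ℝ) := by exact_mod_cast hN
  apply Real.tsum_le_of_sum_range_le (fun n => by positivity)
  intro m
  have key : ∀ i : ℕ, ((i : ℝ) + N + 1) ^ (-(s + 1)) ≤
      (1 / s) * (((N : ℝ) + i) ^ (-s) - ((N : ℝ) + ((i + 1 : ℕ) : ℝ)) ^ (-s)) := by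
    intro i
    have ha : (1:ℝ) ≤ (N : ℝ) + i := by
      have : (0:ℝ) ≤ (i:ℝ) := Nat.cast_nonneg i
      linarith
    have h := rpow_tele s hs ((N:ℝ) + i) ha
    have e1 : (N:ℝ) + i + 1 = (i:ℝ) + N + 1 := by ring
    have e2 : (N:ℝ) + ((i:ℝ) + 1) = (N:ℝ) + i + 1 := by ring
    rw [e1] at h
    push_cast
    rw [e2, ← e1]
    calc ((N:ℝ) + i + 1) ^ (-(s + 1))
        = (1 / s) * (s * ((N:ℝ) + i + 1) ^ (-(s + 1))) := by field_simp
      _ ≤ (1 / s) * (((N : ℝ) + i) ^ (-s) - ((N : ℝ) + i + 1) ^ (-s)) := by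
          rw [e1]
          exact mul_le_mul_of_nonneg_left h (by positivity)
  calc ∑ i ∈ Finset.range m, ((i : ℝ) + N + 1) ^ (-(s + 1))
      ≤ ∑ i ∈ Finset.range m, (1 / s) * (((N : ℝ) + i) ^ (-s) - ((N : ℝ) + ((i + 1 : ℕ) : ℝ)) ^ (-s)) :=
        Finset.sum_le_sum fun i _ => key i
    _ = (1 / s) * ∑ i ∈ Finset.range m,
          (((N : ℝ) + i) ^ (-s) - ((N : ℝ) + ((i + 1 : ℕ) : ℝ)) ^ (-s)) := by
        rw [Finset.mul_sum]
    _ = (1 / s) * (((N : ℝ) + (0:ℕ)) ^ (-s) - ((N : ℝ) + m) ^ (-s)) := by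
        rw [Finset.sum_range_sub' (fun i : ℕ => ((N : ℝ) + i) ^ (-s))]
    _ ≤ (1 / s) * (N : ℝ) ^ (-s) := by
        have h1 : (0:ℝ) ≤ ((N : ℝ) + m) ^ (-s) := by positivity
        have h2 : ((N : ℝ) + (0:ℕ)) ^ (-s) = (N:ℝ) ^ (-s) := by norm_num
        rw [h2]
        have : (0:ℝ) ≤ 1 / s := by positivity
        nlinarith [Real.rpow_pos_of_pos (show (0:ℝ) < N by linarith) (-s)]

/-- If `μ` is non-increasing, nonnegative, with polynomial eigendecay `μ_i ≤ C₁ i^{-s}`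
(indexing: `μ n` is the `(n+1)`-st eigenvalue), and `h i = μ i/(τ+μ i)`, then
`∑ h_i / i ≤ c_s · log(e + C₁/τ)` for a constant `c_s` depending only on `s`. -/
theorem spectral_log_sum (s : ℝ) (hs : 0 < s) :
    ∃ c : ℝ, 0 < c ∧
      ∀ (τ C₁ : ℝ) (μ : ℕ → ℝ), 0 < τ → 0 < C₁ →
        (∀ i, 0 ≤ μ i) → Antitone μ →
        (∀ n : ℕ, μ n ≤ C₁ * ((n : ℝ) + 1) ^ (-s)) →
        (∑' n : ℕ, (μ n / (τ + μ n)) / ((n : ℝ) + 1)) ≤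
          c * Real.log (Real.exp 1 + C₁ / τ) := by
  refine ⟨3 + 2 / s, by positivity, ?_⟩
  intro τ C₁ μ hτ hC hμ0 hmono hdecay
  set R : ℝ := C₁ / τ with hRdef
  have hR0 : 0 < R := div_pos hC hτ
  set f : ℕ → ℝ := fun n => (μ n / (τ + μ n)) / ((n : ℝ) + 1) with hfdef
  set L : ℝ := Real.log (Real.exp 1 + R) with hLdef
  have hL1 : 1 ≤ L := by
    rw [hLdef]
    calc (1:ℝ) = Real.log (Real.exp 1) := (Real.log_exp 1).symm
      _ ≤ Real.log (Real.exp 1 + R) :=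
        Real.log_le_log (Real.exp_pos 1) (by linarith)
  -- basic per-term facts
  have hden : ∀ n, (0:ℝ) < τ + μ n := fun n => by have := hμ0 n; linarith
  have hnp : ∀ n : ℕ, (0:ℝ) < (n:ℝ) + 1 := fun n => by positivity
  have hf0 : ∀ n, 0 ≤ f n := by
    intro n
    have := hμ0 n; have := hden n; have := hnp n
    positivity
  have hf1 : ∀ n, f n ≤ ((n:ℝ) + 1)⁻¹ := by
    intro n
    have hq : μ n / (τ + μ n) ≤ 1 := by
      rw [div_le_one (hden n)]; linarith [hμ0 n]
    calc f n ≤ 1 / ((n:ℝ) + 1) := by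
          show μ n / (τ + μ n) / ((n:ℝ) + 1) ≤ 1 / ((n:ℝ) + 1)
          gcongr
      _ = ((n:ℝ) + 1)⁻¹ := one_div _
  have hf2 : ∀ n, f n ≤ R * ((n:ℝ) + 1) ^ (-(s + 1)) := by
    intro n
    have hq : μ n / (τ + μ n) ≤ R * ((n:ℝ) + 1) ^ (-s) := by
      have h1 : μ n / (τ + μ n) ≤ μ n / τ := by
        gcongr
        · exact hμ0 n
        · linarith [hμ0 n]
      have h2 : μ n / τ ≤ (C₁ * ((n:ℝ) + 1) ^ (-s)) / τ := by
        gcongr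
        exact hdecay n
      have h3 : (C₁ * ((n:ℝ) + 1) ^ (-s)) / τ = R * ((n:ℝ) + 1) ^ (-s) := by
        rw [hRdef]; ring
      linarith
    have hsplit : ((n:ℝ) + 1) ^ (-(s + 1)) = ((n:ℝ) + 1) ^ (-s) * ((n:ℝ) + 1)⁻¹ := by
      rw [← Real.rpow_neg_one ((n:ℝ) + 1), ← Real.rpow_add (hnp n)]; ring_nf
    calc f n ≤ (R * ((n:ℝ) + 1) ^ (-s)) / ((n:ℝ) + 1) := by
          show μ n / (τ + μ n) / ((n:ℝ) + 1) ≤ _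
          gcongr
      _ = R * ((n:ℝ) + 1) ^ (-(s + 1)) := by
          rw [hsplit, div_eq_mul_inv]; ring
  -- summability
  have hsum1 : Summable (fun n : ℕ => ((n:ℝ) + 1) ^ (-(s + 1))) := by
    have h := (Real.summable_nat_rpow (p := -(s + 1))).2 (by linarith)
    have h2 := (summable_nat_add_iff 1).2 h
    refine h2.congr fun n => ?_
    push_cast
    ring_nf
  have hsumf : Summable f :=
    Summable.of_nonneg_of_le hf0 hf2 (hsum1.mul_left R)
  -- split index
  set N : ℕ := ⌈R ^ (1 / s)⌉₊ + 1 with hNdef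
  have hN1 : 1 ≤ N := Nat.le_add_left 1 _
  have hNlb : R ^ (1 / s) ≤ (N:ℝ) := by
    calc R ^ (1 / s) ≤ (⌈R ^ (1 / s)⌉₊ : ℝ) := Nat.le_ceil _
      _ ≤ (N:ℝ) := by rw [hNdef]; push_cast; linarith
  have hNub : (N:ℝ) ≤ R ^ (1 / s) + 2 := by
    rw [hNdef]; push_cast
    have := Nat.ceil_lt_add_one (show (0:ℝ) ≤ R ^ (1 / s) by positivity)
    linarith
  have hNs : R ≤ (N:ℝ) ^ s := by
    have h0 : (0:ℝ) ≤ R ^ (1 / s) := by positivity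
    have := Real.rpow_le_rpow h0 hNlb hs.le
    rwa [← Real.rpow_mul hR0.le, one_div,
      inv_mul_cancel₀ hs.ne', Real.rpow_one] at this
  have hN0 : (0:ℝ) < (N:ℝ) := by exact_mod_cast hN1
  -- head bound
  have hharm : (harmonic N : ℝ) = ∑ i ∈ Finset.range N, ((i:ℝ) + 1)⁻¹ := by
    rw [harmonic]; push_cast; rfl
  have hhead : ∑ i ∈ Finset.range N, f i ≤ 1 + Real.log N := by
    calc ∑ i ∈ Finset.range N, f i ≤ ∑ i ∈ Finset.range N, ((i:ℝ) + 1)⁻¹ :=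
          Finset.sum_le_sum fun i _ => hf1 i
      _ = (harmonic N : ℝ) := hharm.symm
      _ ≤ 1 + Real.log N := harmonic_le_one_add_log N
  -- tail bound
  have htail : (∑' i : ℕ, f (i + N)) ≤ 1 / s := by
    have hle : ∀ i : ℕ, f (i + N) ≤ R * ((i:ℝ) + N + 1) ^ (-(s + 1)) := by
      intro i
      have h := hf2 (i + N)
      rw [Nat.cast_add] at h
      exact h
    have hsumtail : Summable (fun i : ℕ => ((i:ℝ) + N + 1) ^ (-(s + 1))) := by
      have h := (summable_nat_add_iff N).2 hsum1
      refine h.congr fun i => ?_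
      push_cast
      ring_nf
    calc (∑' i : ℕ, f (i + N))
        ≤ ∑' i : ℕ, R * ((i:ℝ) + N + 1) ^ (-(s + 1)) :=
          Summable.tsum_le_tsum hle ((summable_nat_add_iff N).2 hsumf) (hsumtail.mul_left R)
      _ = R * ∑' i : ℕ, ((i:ℝ) + N + 1) ^ (-(s + 1)) := tsum_mul_left
      _ ≤ R * ((1 / s) * (N:ℝ) ^ (-s)) := by
          exact mul_le_mul_of_nonneg_left (tail_rpow_sum s hs N hN1) hR0.le
      _ = (1 / s) * (R * (N:ℝ) ^ (-s)) := by ring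
      _ ≤ 1 / s := by
          have hNs' : R * (N:ℝ) ^ (-s) ≤ 1 := by
            rw [Real.rpow_neg hN0.le, ← div_eq_mul_inv]
            exact div_le_one_of_le₀ hNs (by positivity)
          nlinarith [one_div_pos.2 hs]
  -- log bound
  have hlogN : Real.log N ≤ Real.log 3 + (1 / s) * L := by
    have h1 : Real.log N ≤ Real.log (R ^ (1 / s) + 2) := Real.log_le_log hN0 hNub
    set M : ℝ := max (R ^ (1 / s)) 1 with hM
    have hM1 : (1:ℝ) ≤ M := le_max_right _ _
    have h2 : R ^ (1 / s) + 2 ≤ 3 * M := by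
      have := le_max_left (R ^ (1 / s)) 1
      linarith
    have h3 : Real.log (R ^ (1 / s) + 2) ≤ Real.log (3 * M) :=
      Real.log_le_log (by positivity) h2
    have h4 : Real.log (3 * M) = Real.log 3 + Real.log M :=
      Real.log_mul (by norm_num) (by linarith)
    have h5 : Real.log M ≤ (1 / s) * L := by
      rcases max_cases (R ^ (1 / s)) 1 with ⟨he, _⟩ | ⟨he, _⟩
      · rw [hM, he, Real.log_rpow hR0]
        have hRL : Real.log R ≤ L := by
          rw [hLdef]
          exact Real.log_le_log hR0 (by linarith [Real.exp_pos 1])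
        have := mul_le_mul_of_nonneg_left hRL (by positivity : (0:ℝ) ≤ 1 / s)
        linarith
      · rw [hM, he, Real.log_one]
        have h6 : (0:ℝ) < 1 / s := one_div_pos.2 hs
        nlinarith
    linarith
  have hlog3 : Real.log 3 ≤ 2 := by
    have := Real.log_le_sub_one_of_pos (show (0:ℝ) < 3 by norm_num)
    linarith
  have h1s : (0:ℝ) < 1 / s := one_div_pos.2 hs
  calc (∑' n : ℕ, f n)
      = ∑ i ∈ Finset.range N, f i + ∑' i : ℕ, f (i + N) :=
        (Summable.sum_add_tsum_nat_add N hsumf).symm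
    _ ≤ (1 + Real.log N) + 1 / s := add_le_add hhead htail
    _ ≤ (1 + (Real.log 3 + (1 / s) * L)) + 1 / s := by linarith
    _ ≤ (3 + 2 / s) * L := by
        have hint : 1 / s * 1 ≤ 1 / s * L := mul_le_mul_of_nonneg_left hL1 h1s.le
        have h2s : (2:ℝ) / s = 2 * (1 / s) := by ring
        nlinarith [hint, h2s]
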